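/- Consider the greedy walk on a Poisson point process of intensity 1 on ℝ where every point carries exactly one mark (each point is removed upon its first visit). Then almost surely there exists N such that the walk is strictly monotone from time N on (it eventually moves monotonically either to +∞ or to −∞); in particular, infinitely many Poisson points are never visited. -/

import Mathlib

open scoped ENNReal

noncomputable section

/-- The number of points of a configuration `Xs ⊆ ℝ` lying in a window `A`. -/
def ptCount (Xs : Set ℝ) (A : Set ℝ) : ℕ := (Xs ∩ A).ncard

/-- `N` is a Poisson point process of intensity `c` (with respect to Lebesgue measure)
under the probability measure `P`: configurations are a.s. locally finite, the number of
points in any finite-volume measurable window is Poisson distributed with mean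
`c * volume A`, and the counts in pairwise disjoint windows are independent. -/
def IsPoissonPP {Ω : Type} [MeasurableSpace Ω] (P : MeasureTheory.Measure Ω)
    (N : Ω → Set ℝ) (c : ℝ) : Prop :=
  (∀ᵐ ωs ∂P, ∀ r : ℝ, (N ωs ∩ Set.Icc (-r) r).Finite) ∧
  (∀ A : Set ℝ, MeasurableSet A → Measurable fun ωs => ptCount (N ωs) A) ∧
  (∀ A : Set ℝ, MeasurableSet A → MeasureTheory.volume A ≠ ⊤ → ∀ n : ℕ,
      P {ωs | ptCount (N ωs) A = n} =
        ENNReal.ofReal (Real.exp (-(c * (MeasureTheory.volume A).toReal)) *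
          (c * (MeasureTheory.volume A).toReal) ^ n / n.factorial)) ∧
  (∀ (m : ℕ) (A : Fin m → Set ℝ), (∀ i, MeasurableSet (A i)) →
      Pairwise (Function.onFun Disjoint A) →
      ProbabilityTheory.iIndepFun
        (fun i ωs => ptCount (N ωs) (A i)) P)

/-- The greedy (tourist) walk on a Poisson point process of intensity `1` on `ℝ` where
every point carries exactly one mark: under the Palm measure (a point is added at the
origin), `S 0 = 0` and `S (n+1)` is the point of `𝒳` not yet visited that is nearest to
`S n` (each point is removed upon its first visit); the next point is a.s. unique. -/
structure SingleMarkModel where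
  Ω : Type
  [mΩ : MeasurableSpace Ω]
  P : MeasureTheory.Measure Ω
  hprob : MeasureTheory.IsProbabilityMeasure P
  X : Ω → Set ℝ
  /-- Palm conditioning on `0 ∈ 𝒳`: there is a point at the origin. -/
  h0X : ∀ ωs, (0 : ℝ) ∈ X ωs
  /-- Away from the origin, `𝒳` is a Poisson point process of intensity `1`. -/
  hpoisson : IsPoissonPP P (fun ωs => X ωs \ {0}) 1
  S : ℕ → Ω → ℝ
  hS0 : ∀ ωs, S 0 ωs = 0
  hmeasS : ∀ n, Measurable fun ωs => S n ωs
  /-- Almost surely the walk is well defined: `S (n+1)` is a non-visited point of `𝒳`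
  strictly closer to `S n` than any other non-visited point. -/
  hwalk : ∀ᵐ ωs ∂P, ∀ n : ℕ,
      S (n + 1) ωs ∈ X ωs ∧ (∀ m ≤ n, S (n + 1) ωs ≠ S m ωs) ∧
      ∀ z ∈ X ωs, (∀ m ≤ n, z ≠ S m ωs) → z ≠ S (n + 1) ωs →
        |S (n + 1) ωs - S n ωs| < |z - S n ωs|

attribute [instance] SingleMarkModel.mΩ


namespace GW

variable (S : ℕ → ℝ)

/-- running minimum of the walk -/
def mLo : ℕ → ℝ
  | 0 => S 0
  | n+1 => min (mLo n) (S (n+1))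

/-- running maximum of the walk -/
def mHi : ℕ → ℝ
  | 0 => S 0
  | n+1 => max (mHi n) (S (n+1))

/-- spanned width -/
def Wd (n : ℕ) : ℝ := mHi S n - mLo S n

/-- a crossing of the spanned interval at time `n` -/
def Cross (n : ℕ) : Prop :=
  (S n = mHi S n ∧ S (n+1) < mLo S n) ∨ (S n = mLo S n ∧ mHi S n < S (n+1))

lemma mLo_le {i n : ℕ} (h : i ≤ n) : mLo S n ≤ S i := by
  induction n with
  | zero => interval_cases i; simp [mLo]
  | succ n ih =>
    rcases Nat.lt_or_ge i (n+1) with h'|h'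
    · exact le_trans (min_le_left _ _) (ih (Nat.lt_succ_iff.mp h'))
    · have : i = n+1 := le_antisymm h h'
      subst this; exact min_le_right _ _

lemma le_mHi {i n : ℕ} (h : i ≤ n) : S i ≤ mHi S n := by
  induction n with
  | zero => interval_cases i; simp [mHi]
  | succ n ih =>
    rcases Nat.lt_or_ge i (n+1) with h'|h'
    · exact le_trans (ih (Nat.lt_succ_iff.mp h')) (le_max_left _ _)
    · have : i = n+1 := le_antisymm h h'
      subst this; exact le_max_right _ _

lemma mLo_anti : Antitone (mLo S) := by
  apply antitone_nat_of_succ_le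
  intro n; exact min_le_left _ _

lemma mHi_mono : Monotone (mHi S) := by
  apply monotone_nat_of_le_succ
  intro n; exact le_max_left _ _

lemma mLo_attained (n : ℕ) : ∃ i ≤ n, mLo S n = S i := by
  induction n with
  | zero => exact ⟨0, le_refl 0, rfl⟩
  | succ n ih =>
    obtain ⟨i, hi, hEq⟩ := ih
    rcases min_cases (mLo S n) (S (n+1)) with ⟨h1, _⟩|⟨h1, _⟩
    · exact ⟨i, hi.trans (Nat.le_succ n), by rw [mLo, h1, hEq]⟩
    · exact ⟨n+1, le_refl _, by rw [mLo, h1]⟩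

lemma mHi_attained (n : ℕ) : ∃ i ≤ n, mHi S n = S i := by
  induction n with
  | zero => exact ⟨0, le_refl 0, rfl⟩
  | succ n ih =>
    obtain ⟨i, hi, hEq⟩ := ih
    rcases max_cases (mHi S n) (S (n+1)) with ⟨h1, _⟩|⟨h1, _⟩
    · exact ⟨i, hi.trans (Nat.le_succ n), by rw [mHi, h1, hEq]⟩
    · exact ⟨n+1, le_refl _, by rw [mHi, h1]⟩

variable {S}

lemma mLo_nonpos (hS0 : S 0 = 0) (n : ℕ) : mLo S n ≤ 0 := hS0 ▸ mLo_le S (Nat.zero_le n)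

lemma mHi_nonneg (hS0 : S 0 = 0) (n : ℕ) : 0 ≤ mHi S n := hS0 ▸ le_mHi S (Nat.zero_le n)

lemma mLo_le_mHi (n : ℕ) : mLo S n ≤ mHi S n :=
  (mLo_le S (Nat.zero_le n)).trans (le_mHi S (Nat.zero_le n))

lemma Wd_nonneg (n : ℕ) : 0 ≤ Wd S n := sub_nonneg.mpr (mLo_le_mHi n)

lemma Wd_mono : Monotone (Wd S) := fun a b h =>
  sub_le_sub (mHi_mono S h) (mLo_anti S h)

lemma mHi_le_Wd (hS0 : S 0 = 0) (n : ℕ) : mHi S n ≤ Wd S n := by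
  have := mLo_nonpos hS0 n; unfold Wd; linarith

lemma neg_Wd_le_mLo (hS0 : S 0 = 0) (n : ℕ) : -Wd S n ≤ mLo S n := by
  have := mHi_nonneg hS0 n; unfold Wd; linarith


section Main

variable {X : Set ℝ} {S : ℕ → ℝ} {u l : ℝ → ℝ}
variable (h0X : (0:ℝ) ∈ X) (hS0 : S 0 = 0)
variable (hw : ∀ n : ℕ, S (n + 1) ∈ X ∧ (∀ m ≤ n, S (n + 1) ≠ S m) ∧
      ∀ z ∈ X, (∀ m ≤ n, z ≠ S m) → z ≠ S (n + 1) →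
        |S (n + 1) - S n| < |z - S n|)
variable (huX : ∀ a, u a ∈ X) (hua : ∀ a, a < u a)
variable (humin : ∀ x ∈ X, ∀ a, a < x → u a ≤ x)
variable (hlX : ∀ a, l a ∈ X) (hla : ∀ a, l a < a)
variable (hlmax : ∀ x ∈ X, ∀ a, x < a → x ≤ l a)

include hw in
lemma sne {i j : ℕ} (h : i < j) : S j ≠ S i := by
  obtain ⟨k, rfl⟩ := Nat.exists_eq_add_of_lt h
  exact (hw (i + k)).2.1 i (Nat.le_add_right i k)

include h0X hS0 hw in
lemma SX (n : ℕ) : S n ∈ X := by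
  cases n with
  | zero => rw [hS0]; exact h0X
  | succ n => exact (hw n).1

include huX hua humin hlX hla hlmax hw in
/-- key invariant: all configuration points in the spanned interval are visited, and
the next step goes to the nearest free point on the left or on the right. -/
lemma key : ∀ n : ℕ,
    (∀ x ∈ X, GW.mLo S n ≤ x → x ≤ GW.mHi S n → ∃ i ≤ n, S i = x) ∧
    (S (n+1) = l (GW.mLo S n) ∨ S (n+1) = u (GW.mHi S n)) := by
  have step : ∀ n : ℕ, (∀ x ∈ X, GW.mLo S n ≤ x → x ≤ GW.mHi S n → ∃ i ≤ n, S i = x) →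
      (S (n+1) = l (GW.mLo S n) ∨ S (n+1) = u (GW.mHi S n)) := by
    intro n hblock
    by_contra hcon
    push_neg at hcon
    obtain ⟨hnl, hnu⟩ := hcon
    have hfree : ∀ m ≤ n, S (n+1) ≠ S m := (hw n).2.1
    have hout : S (n+1) < GW.mLo S n ∨ GW.mHi S n < S (n+1) := by
      by_contra h
      push_neg at h
      obtain ⟨i, hi, hEq⟩ := hblock _ ((hw n).1) h.1 h.2
      exact hfree i hi hEq.symm
    have hSn_le : S n ≤ GW.mHi S n := GW.le_mHi S (le_refl n)
    have hSn_ge : GW.mLo S n ≤ S n := GW.mLo_le S (le_refl n)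
    rcases hout with hout|hout
    · -- went left of mLo but not to l : contradiction with minimality
      have hlfree : ∀ m ≤ n, l (GW.mLo S n) ≠ S m := by
        intro m hm
        have : GW.mLo S n ≤ S m := GW.mLo_le S hm
        exact fun hEq => absurd (hEq ▸ this) (not_le.mpr (hla _))
      have hlt := (hw n).2.2 (l (GW.mLo S n)) (hlX _) hlfree (fun h => hnl h.symm)
      -- S(n+1) < mLo n, and S(n+1) ∈ X with S(n+1) < mLo n so S(n+1) ≤ l (mLo n)
      have hle : S (n+1) ≤ l (GW.mLo S n) := hlmax _ ((hw n).1) _ hout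
      have h1 : |S (n+1) - S n| = S n - S (n+1) := by
        rw [abs_sub_comm]; exact abs_of_nonneg (by linarith)
      have h2 : |l (GW.mLo S n) - S n| = S n - l (GW.mLo S n) := by
        rw [abs_sub_comm]; exact abs_of_nonneg (by have := hla (GW.mLo S n); linarith)
      rw [h1, h2] at hlt; linarith
    · have hufree : ∀ m ≤ n, u (GW.mHi S n) ≠ S m := by
        intro m hm
        have : S m ≤ GW.mHi S n := GW.le_mHi S hm
        exact fun hEq => absurd (hEq ▸ this) (not_le.mpr (hua _))
      have hlt := (hw n).2.2 (u (GW.mHi S n)) (huX _) hufree (fun h => hnu h.symm)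
      have hle : u (GW.mHi S n) ≤ S (n+1) := humin _ ((hw n).1) _ hout
      have h1 : |S (n+1) - S n| = S (n+1) - S n := abs_of_nonneg (by linarith)
      have h2 : |u (GW.mHi S n) - S n| = u (GW.mHi S n) - S n :=
        abs_of_nonneg (by have := hua (GW.mHi S n); linarith)
      rw [h1, h2] at hlt; linarith
  intro n
  induction n with
  | zero =>
    constructor
    · intro x hx h1 h2
      exact ⟨0, le_refl 0, le_antisymm (by simpa [GW.mLo] using h1) (by simpa [GW.mHi] using h2)⟩
    · apply step
      intro x hx h1 h2
      exact ⟨0, le_refl 0, le_antisymm (by simpa [GW.mLo] using h1) (by simpa [GW.mHi] using h2)⟩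
  | succ n ih =>
    have hblock' : ∀ x ∈ X, GW.mLo S (n+1) ≤ x → x ≤ GW.mHi S (n+1) → ∃ i ≤ n+1, S i = x := by
      intro x hx h1 h2
      rcases ih.2 with hc|hc
      · -- stepped to l (mLo S n) : new mLo is l(mLo S n), mHi unchanged
        have hl_lt : l (GW.mLo S n) < GW.mLo S n := hla _
        have hmLo : GW.mLo S (n+1) = l (GW.mLo S n) := by
          rw [GW.mLo, hc, min_eq_right hl_lt.le]
        have hmHi : GW.mHi S (n+1) = GW.mHi S n := by
          rw [GW.mHi, hc, max_eq_left (hl_lt.le.trans (GW.mLo_le_mHi n))]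
        rw [hmLo] at h1; rw [hmHi] at h2
        rcases lt_or_ge x (GW.mLo S n) with h3|h3
        · have : x ≤ l (GW.mLo S n) := hlmax x hx _ h3
          exact ⟨n+1, le_refl _, by rw [hc]; linarith⟩
        · obtain ⟨i, hi, hEq⟩ := ih.1 x hx h3 h2
          exact ⟨i, hi.trans (Nat.le_succ n), hEq⟩
      · have hu_gt : GW.mHi S n < u (GW.mHi S n) := hua _
        have hmHi : GW.mHi S (n+1) = u (GW.mHi S n) := by
          rw [GW.mHi, hc, max_eq_right hu_gt.le]
        have hmLo : GW.mLo S (n+1) = GW.mLo S n := by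
          rw [GW.mLo, hc, min_eq_left ((GW.mLo_le_mHi n).trans hu_gt.le)]
        rw [hmLo] at h1; rw [hmHi] at h2
        rcases lt_or_ge (GW.mHi S n) x with h3|h3
        · have : u (GW.mHi S n) ≤ x := humin x hx _ h3
          exact ⟨n+1, le_refl _, by rw [hc]; linarith⟩
        · obtain ⟨i, hi, hEq⟩ := ih.1 x hx h1 h3
          exact ⟨i, hi.trans (Nat.le_succ n), hEq⟩
    exact ⟨hblock', step _ hblock'⟩

include huX hua humin hlX hla hlmax hw in
/-- the walk is always at an end of the spanned interval -/
lemma at_end : ∀ n : ℕ, S n = GW.mLo S n ∨ S n = GW.mHi S n := by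
  intro n
  cases n with
  | zero => left; rfl
  | succ n =>
    rcases (key hw huX hua humin hlX hla hlmax n).2 with hc|hc
    · left
      have hl_lt : l (GW.mLo S n) < GW.mLo S n := hla _
      rw [GW.mLo, hc, min_eq_right hl_lt.le]
    · right
      have hu_gt : GW.mHi S n < u (GW.mHi S n) := hua _
      rw [GW.mHi, hc, max_eq_right hu_gt.le]

include huX hua humin hlX hla hlmax hw in
lemma stepL {n : ℕ} (hend : S n = GW.mLo S n) (hnc : ¬ GW.Cross S n) :
    S (n+1) = GW.mLo S (n+1) ∧ S (n+1) < S n ∧ GW.mHi S (n+1) = GW.mHi S n := by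
  rcases (key hw huX hua humin hlX hla hlmax n).2 with hc|hc
  · have hlt : S (n+1) < GW.mLo S n := hc ▸ hla _
    refine ⟨?_, hend ▸ hlt, ?_⟩
    · rw [GW.mLo, min_eq_right hlt.le]
    · rw [GW.mHi, max_eq_left (hlt.le.trans (GW.mLo_le_mHi n))]
  · exact absurd (Or.inr ⟨hend, hc ▸ hua _⟩) hnc

include huX hua humin hlX hla hlmax hw in
lemma stepR {n : ℕ} (hend : S n = GW.mHi S n) (hnc : ¬ GW.Cross S n) :
    S (n+1) = GW.mHi S (n+1) ∧ S n < S (n+1) ∧ GW.mLo S (n+1) = GW.mLo S n := by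
  rcases (key hw huX hua humin hlX hla hlmax n).2 with hc|hc
  · exact absurd (Or.inl ⟨hend, hc ▸ hla _⟩) hnc
  · have hlt : GW.mHi S n < S (n+1) := hc ▸ hua _
    refine ⟨?_, hend ▸ hlt, ?_⟩
    · rw [GW.mHi, max_eq_right hlt.le]
    · rw [GW.mLo, min_eq_left ((GW.mLo_le_mHi n).trans hlt.le)]

include huX hua humin hlX hla hlmax hw in
lemma cross_right_facts {n : ℕ} (hr1 : S n = GW.mHi S n) (hr2 : S (n+1) < GW.mLo S n) :
    S (n+1) = l (GW.mLo S n) ∧ GW.mHi S (n+1) = GW.mHi S n ∧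
    GW.mLo S (n+1) = l (GW.mLo S n) ∧
    GW.mHi S n - l (GW.mLo S n) < u (GW.mHi S n) - GW.mHi S n := by
  have hstep : S (n+1) = l (GW.mLo S n) := by
    rcases (key hw huX hua humin hlX hla hlmax n).2 with hc|hc
    · exact hc
    · exfalso
      have : GW.mHi S n < S (n+1) := hc ▸ hua _
      have := GW.mLo_le_mHi (S := S) n
      linarith
  have hl_lt : l (GW.mLo S n) < GW.mLo S n := hla _
  have hmHi : GW.mHi S (n+1) = GW.mHi S n := by
    rw [GW.mHi, hstep, max_eq_left (hl_lt.le.trans (GW.mLo_le_mHi n))]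
  have hmLo : GW.mLo S (n+1) = l (GW.mLo S n) := by
    rw [GW.mLo, hstep, min_eq_right hl_lt.le]
  refine ⟨hstep, hmHi, hmLo, ?_⟩
  -- use the greedy property against the right candidate u (mHi S n)
  have hufree : ∀ m ≤ n, u (GW.mHi S n) ≠ S m := by
    intro m hm
    have : S m ≤ GW.mHi S n := GW.le_mHi S hm
    exact fun hEq => absurd (hEq ▸ this) (not_le.mpr (hua _))
  have hune : u (GW.mHi S n) ≠ S (n+1) := by
    have h1 := hua (GW.mHi S n)
    have h2 := GW.mLo_le_mHi (S := S) n
    intro hEq; rw [hEq] at h1; linarith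
  have hlt := (hw n).2.2 (u (GW.mHi S n)) (huX _) hufree hune
  have hSle : GW.mLo S n ≤ S n := GW.mLo_le S (le_refl n)
  have h1 : |S (n+1) - S n| = S n - S (n+1) := by
    rw [abs_sub_comm]; exact abs_of_nonneg (by linarith)
  have h2 : |u (GW.mHi S n) - S n| = u (GW.mHi S n) - S n := by
    have := hua (GW.mHi S n); rw [hr1]; exact abs_of_nonneg (by linarith)
  rw [h1, h2] at hlt
  rw [hstep] at hlt
  rw [hr1] at hlt
  linarith

include huX hua humin hlX hla hlmax hw in
lemma cross_left_facts {n : ℕ} (hr1 : S n = GW.mLo S n) (hr2 : GW.mHi S n < S (n+1)) :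
    S (n+1) = u (GW.mHi S n) ∧ GW.mLo S (n+1) = GW.mLo S n ∧
    GW.mHi S (n+1) = u (GW.mHi S n) ∧
    u (GW.mHi S n) - GW.mLo S n < GW.mLo S n - l (GW.mLo S n) := by
  have hstep : S (n+1) = u (GW.mHi S n) := by
    rcases (key hw huX hua humin hlX hla hlmax n).2 with hc|hc
    · exfalso
      have : S (n+1) < GW.mLo S n := hc ▸ hla _
      have := GW.mLo_le_mHi (S := S) n
      linarith
    · exact hc
  have hu_gt : GW.mHi S n < u (GW.mHi S n) := hua _
  have hmLo : GW.mLo S (n+1) = GW.mLo S n := by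
    rw [GW.mLo, hstep, min_eq_left ((GW.mLo_le_mHi n).trans hu_gt.le)]
  have hmHi : GW.mHi S (n+1) = u (GW.mHi S n) := by
    rw [GW.mHi, hstep, max_eq_right hu_gt.le]
  refine ⟨hstep, hmLo, hmHi, ?_⟩
  have hlfree : ∀ m ≤ n, l (GW.mLo S n) ≠ S m := by
    intro m hm
    have : GW.mLo S n ≤ S m := GW.mLo_le S hm
    exact fun hEq => absurd (hEq ▸ this) (not_le.mpr (hla _))
  have hlne : l (GW.mLo S n) ≠ S (n+1) := by
    have h1 := hla (GW.mLo S n)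
    have h2 := GW.mLo_le_mHi (S := S) n
    intro hEq; rw [hEq] at h1; linarith
  have hlt := (hw n).2.2 (l (GW.mLo S n)) (hlX _) hlfree hlne
  have hSle : S n ≤ GW.mHi S n := GW.le_mHi S (le_refl n)
  have h1 : |S (n+1) - S n| = S (n+1) - S n := abs_of_nonneg (by linarith)
  have h2 : |l (GW.mLo S n) - S n| = S n - l (GW.mLo S n) := by
    have := hla (GW.mLo S n)
    rw [abs_sub_comm]; rw [hr1]; exact abs_of_nonneg (by linarith)
  rw [h1, h2] at hlt
  rw [hstep] at hlt
  rw [hr1] at hlt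
  linarith

include huX hua humin hlX hla hlmax hw hS0 in
lemma cross_gap {n : ℕ} (hc : GW.Cross S n) :
    0 < GW.Wd S (n+1) ∧ ∃ a : ℝ, -2 * GW.Wd S (n+1) ≤ a ∧
      a + GW.Wd S (n+1) ≤ 2 * GW.Wd S (n+1) ∧
      ∀ x ∈ X, x ∉ Set.Ioo a (a + GW.Wd S (n+1)) := by
  rcases hc with ⟨hr1, hr2⟩|⟨hr1, hr2⟩
  · obtain ⟨hst, hmHi, hmLo, hgap⟩ := cross_right_facts hw huX hua humin hlX hla hlmax hr1 hr2
    have hW : GW.Wd S (n+1) = GW.mHi S n - l (GW.mLo S n) := by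
      rw [GW.Wd, hmHi, hmLo]
    have hl_lt : l (GW.mLo S n) < GW.mLo S n := hla _
    have h0hi := GW.mHi_nonneg hS0 n
    have h0lo := GW.mLo_nonpos hS0 n
    have hWpos : 0 < GW.Wd S (n+1) := by rw [hW]; have := GW.mLo_le_mHi (S := S) n; linarith
    refine ⟨hWpos, GW.mHi S n, by linarith, by rw [hW]; linarith, ?_⟩
    intro x hx hmem
    obtain ⟨hx1, hx2⟩ := hmem
    have hxu : u (GW.mHi S n) ≤ x := humin x hx _ hx1
    rw [hW] at hx2
    linarith
  · obtain ⟨hst, hmLo, hmHi, hgap⟩ := cross_left_facts hw huX hua humin hlX hla hlmax hr1 hr2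
    have hW : GW.Wd S (n+1) = u (GW.mHi S n) - GW.mLo S n := by
      rw [GW.Wd, hmHi, hmLo]
    have hu_gt : GW.mHi S n < u (GW.mHi S n) := hua _
    have h0hi := GW.mHi_nonneg hS0 n
    have h0lo := GW.mLo_nonpos hS0 n
    have hWpos : 0 < GW.Wd S (n+1) := by rw [hW]; have := GW.mLo_le_mHi (S := S) n; linarith
    refine ⟨hWpos, GW.mLo S n - GW.Wd S (n+1), by rw [hW]; linarith, by linarith, ?_⟩
    intro x hx hmem
    obtain ⟨hx1, hx2⟩ := hmem
    have hxl : x ≤ l (GW.mLo S n) := hlmax x hx _ (by linarith)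
    rw [hW] at hx1
    linarith

include huX hua humin hlX hla hlmax hw h0X hS0 in
lemma cross_growth {n n' : ℕ} (hlt : n < n') (hcn : GW.Cross S n) (hcn' : GW.Cross S n') :
    2 * GW.Wd S (n+1) < GW.Wd S (n'+1) := by
  have hn1 : n + 1 ≤ n' := hlt
  have hWmono : GW.Wd S n' ≤ GW.Wd S (n'+1) := GW.Wd_mono (Nat.le_succ n')
  rcases hcn with ⟨hr1, hr2⟩|⟨hr1, hr2⟩
  · -- rightward crossing at n (jump from mHi to the left)
    obtain ⟨hst, hmHi, hmLo, hgap⟩ := cross_right_facts hw huX hua humin hlX hla hlmax hr1 hr2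
    have hW : GW.Wd S (n+1) = GW.mHi S n - l (GW.mLo S n) := by rw [GW.Wd, hmHi, hmLo]
    have hmlo' : GW.mLo S n' ≤ l (GW.mLo S n) := hmLo ▸ GW.mLo_anti S hn1
    have hmhi' : GW.mHi S n ≤ GW.mHi S n' := hmHi ▸ GW.mHi_mono S hn1
    rcases eq_or_lt_of_le hmhi' with hEq|hlt2
    · rcases hcn' with ⟨hr1', hr2'⟩|⟨hr1', hr2'⟩
      · exfalso
        exact sne hw hlt (by rw [hr1', ← hEq, ← hr1])
      · obtain ⟨hst', hmLo', hmHi', _⟩ := cross_left_facts hw huX hua humin hlX hla hlmax hr1' hr2'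
        have huu : u (GW.mHi S n') = u (GW.mHi S n) := by rw [← hEq]
        have : GW.Wd S (n'+1) = u (GW.mHi S n) - GW.mLo S n' := by
          rw [GW.Wd, hmHi', hmLo', huu]
        rw [this, hW]
        have := GW.mLo_le_mHi (S := S) n
        linarith
    · obtain ⟨i, hi, hEqi⟩ := GW.mHi_attained S n'
      have hxX : S i ∈ X := SX h0X hS0 hw i
      have hxu : u (GW.mHi S n) ≤ GW.mHi S n' := hEqi ▸ humin _ hxX _ (hEqi ▸ hlt2)
      have h1 : GW.Wd S n' = GW.mHi S n' - GW.mLo S n' := rfl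
      have := GW.mLo_le_mHi (S := S) n
      rw [hW]
      have h2 : GW.Wd S n' ≥ u (GW.mHi S n) - l (GW.mLo S n) := by
        rw [h1]; linarith
      linarith
  · -- leftward crossing at n (jump from mLo to the right)
    obtain ⟨hst, hmLo, hmHi, hgap⟩ := cross_left_facts hw huX hua humin hlX hla hlmax hr1 hr2
    have hW : GW.Wd S (n+1) = u (GW.mHi S n) - GW.mLo S n := by rw [GW.Wd, hmHi, hmLo]
    have hmhi' : u (GW.mHi S n) ≤ GW.mHi S n' := hmHi ▸ GW.mHi_mono S hn1
    have hmlo' : GW.mLo S n' ≤ GW.mLo S n := hmLo ▸ GW.mLo_anti S hn1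
    rcases eq_or_lt_of_le hmlo' with hEq|hlt2
    · rcases hcn' with ⟨hr1', hr2'⟩|⟨hr1', hr2'⟩
      · obtain ⟨hst', hmHi', hmLo', _⟩ := cross_right_facts hw huX hua humin hlX hla hlmax hr1' hr2'
        have hll : l (GW.mLo S n') = l (GW.mLo S n) := by rw [hEq]
        have : GW.Wd S (n'+1) = GW.mHi S n' - l (GW.mLo S n) := by
          rw [GW.Wd, hmHi', hmLo', hll]
        rw [this, hW]
        have := GW.mLo_le_mHi (S := S) n
        linarith
      · exfalso
        exact sne hw hlt (by rw [hr1', hEq, ← hr1])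
    · obtain ⟨i, hi, hEqi⟩ := GW.mLo_attained S n'
      have hxX : S i ∈ X := SX h0X hS0 hw i
      have hxl : GW.mLo S n' ≤ l (GW.mLo S n) := hEqi ▸ hlmax _ hxX _ (hEqi ▸ hlt2)
      have h1 : GW.Wd S n' = GW.mHi S n' - GW.mLo S n' := rfl
      have := GW.mLo_le_mHi (S := S) n
      have h2 : GW.Wd S n' ≥ u (GW.mHi S n) - l (GW.mLo S n) := by rw [h1]; linarith
      rw [hW]
      linarith

include huX hua humin hlX hla hlmax hw h0X hS0 in
lemma widths_unbounded (hinf : ∀ N : ℕ, ∃ n, N ≤ n ∧ GW.Cross S n) (T : ℝ) :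
    ∃ n, GW.Cross S n ∧ T ≤ GW.Wd S (n+1) := by
  obtain ⟨n₀, _, hc₀⟩ := hinf 0
  set w0 := GW.Wd S (n₀+1) with hw0
  have hw0pos : 0 < w0 := (cross_gap hS0 hw huX hua humin hlX hla hlmax hc₀).1
  have hk : ∀ k : ℕ, ∃ n, GW.Cross S n ∧ 2^k * w0 ≤ GW.Wd S (n+1) := by
    intro k
    induction k with
    | zero => exact ⟨n₀, hc₀, by rw [pow_zero, one_mul, hw0]⟩
    | succ k ih =>
      obtain ⟨n, hcn, hWn⟩ := ih
      obtain ⟨n', hn', hcn'⟩ := hinf (n+1)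
      have hlt : n < n' := hn'
      have hgrow := cross_growth h0X hS0 hw huX hua humin hlX hla hlmax hlt hcn hcn'
      refine ⟨n', hcn', ?_⟩
      have : (2:ℝ)^(k+1) * w0 = 2 * (2^k * w0) := by ring
      rw [this]
      linarith
  obtain ⟨k, hTk⟩ := pow_unbounded_of_one_lt (T / w0) (by norm_num : (1:ℝ) < 2)
  obtain ⟨n, hcn, hWn⟩ := hk k
  refine ⟨n, hcn, ?_⟩
  have : T < 2^k * w0 := by
    have := (div_lt_iff₀ hw0pos).mp hTk
    linarith
  linarith

lemma infinite_of_unbounded_above {s : Set ℝ} (h : ∀ r : ℝ, ∃ x ∈ s, r < x) : s.Infinite := by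
  intro hfin
  obtain ⟨b, hb⟩ := hfin.bddAbove
  obtain ⟨x, hx, hbx⟩ := h b
  exact absurd (hb hx) (not_le.mpr hbx)

lemma infinite_of_unbounded_below {s : Set ℝ} (h : ∀ r : ℝ, ∃ x ∈ s, x < r) : s.Infinite := by
  intro hfin
  obtain ⟨b, hb⟩ := hfin.bddBelow
  obtain ⟨x, hx, hbx⟩ := h b
  exact absurd (hb hx) (not_le.mpr hbx)

include huX hua humin hlX hla hlmax hw hS0 h0X in
lemma eventually_mono {N : ℕ} (hnc : ∀ k, N ≤ k → ¬ GW.Cross S k) :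
    (StrictMono (fun k => S (N + k)) ∧ ∀ i, GW.mLo S N ≤ S i) ∨
    (StrictAnti (fun k => S (N + k)) ∧ ∀ i, S i ≤ GW.mHi S N) := by
  rcases at_end hw huX hua humin hlX hla hlmax N with hend|hend
  · right
    have hB : ∀ k : ℕ, S (N + k) = GW.mLo S (N + k) ∧ S (N + k + 1) < S (N + k) ∧
        GW.mHi S (N + k + 1) = GW.mHi S (N + k) := by
      intro k
      induction k with
      | zero =>
        obtain ⟨h1, h2, h3⟩ := stepL hw huX hua humin hlX hla hlmax hend (hnc N le_rfl)
        exact ⟨hend, h2, h3⟩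
      | succ k ih =>
        have hend' : S (N + k + 1) = GW.mLo S (N + k + 1) :=
          (stepL hw huX hua humin hlX hla hlmax ih.1 (hnc _ (Nat.le_add_right N k))).1
        obtain ⟨h1, h2, h3⟩ := stepL hw huX hua humin hlX hla hlmax hend'
          (hnc _ (by omega))
        exact ⟨hend', h2, h3⟩
    constructor
    · exact strictAnti_nat_of_succ_lt (fun k => (hB k).2.1)
    · have hHiconst : ∀ k : ℕ, GW.mHi S (N + k) = GW.mHi S N := by
        intro k
        induction k with
        | zero => rfl
        | succ k ih => rw [show N + (k+1) = N + k + 1 from rfl, (hB k).2.2, ih]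
      intro i
      rcases le_or_gt i N with hi|hi
      · exact (GW.le_mHi S hi).trans (le_of_eq rfl)
      · obtain ⟨k, rfl⟩ := Nat.exists_eq_add_of_lt hi
        calc S (N + k + 1) ≤ GW.mHi S (N + k + 1) := GW.le_mHi S le_rfl
        _ = GW.mHi S N := hHiconst (k+1)
  · left
    have hB : ∀ k : ℕ, S (N + k) = GW.mHi S (N + k) ∧ S (N + k) < S (N + k + 1) ∧
        GW.mLo S (N + k + 1) = GW.mLo S (N + k) := by
      intro k
      induction k with
      | zero =>
        obtain ⟨h1, h2, h3⟩ := stepR hw huX hua humin hlX hla hlmax hend (hnc N le_rfl)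
        exact ⟨hend, h2, h3⟩
      | succ k ih =>
        have hend' : S (N + k + 1) = GW.mHi S (N + k + 1) :=
          (stepR hw huX hua humin hlX hla hlmax ih.1 (hnc _ (Nat.le_add_right N k))).1
        obtain ⟨h1, h2, h3⟩ := stepR hw huX hua humin hlX hla hlmax hend'
          (hnc _ (by omega))
        exact ⟨hend', h2, h3⟩
    constructor
    · exact strictMono_nat_of_lt_succ (fun k => (hB k).2.1)
    · have hLoconst : ∀ k : ℕ, GW.mLo S (N + k) = GW.mLo S N := by
        intro k
        induction k with
        | zero => rfl
        | succ k ih => rw [show N + (k+1) = N + k + 1 from rfl, (hB k).2.2, ih]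
      intro i
      rcases le_or_gt i N with hi|hi
      · exact GW.mLo_le S hi
      · obtain ⟨k, rfl⟩ := Nat.exists_eq_add_of_lt hi
        calc GW.mLo S N = GW.mLo S (N + k + 1) := (hLoconst (k+1)).symm
        _ ≤ S (N + k + 1) := GW.mLo_le S le_rfl

end Main

lemma exists_next_right {X : Set ℝ} (hfin : ∀ r : ℝ, (X ∩ Set.Icc (-r) r).Finite)
    (hub : ∀ r : ℝ, ∃ x ∈ X, r < x) (a : ℝ) :
    ∃ z, z ∈ X ∧ a < z ∧ ∀ x ∈ X, a < x → z ≤ x := by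
  obtain ⟨x0, hx0X, hx0⟩ := hub a
  set r := max |a| |x0| with hr
  have hT : (X ∩ Set.Ioc a x0).Finite := by
    apply (hfin r).subset
    rintro y ⟨hyX, hy1, hy2⟩
    refine ⟨hyX, ?_, ?_⟩
    · have : -|a| ≤ a := neg_abs_le a
      have : |a| ≤ r := le_max_left _ _
      linarith
    · have : x0 ≤ |x0| := le_abs_self x0
      have : |x0| ≤ r := le_max_right _ _
      linarith
  have hTne : (X ∩ Set.Ioc a x0).Nonempty := ⟨x0, hx0X, hx0, le_refl _⟩
  have hFne : hT.toFinset.Nonempty := by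
    rwa [Set.Finite.toFinset_nonempty]
  refine ⟨hT.toFinset.min' hFne, ?_, ?_, ?_⟩
  · have := hT.toFinset.min'_mem hFne
    rw [Set.Finite.mem_toFinset] at this
    exact this.1
  · have := hT.toFinset.min'_mem hFne
    rw [Set.Finite.mem_toFinset] at this
    exact this.2.1
  · intro x hx hax
    rcases le_or_gt x x0 with h|h
    · exact hT.toFinset.min'_le x (by rw [Set.Finite.mem_toFinset]; exact ⟨hx, hax, h⟩)
    · have h1 : hT.toFinset.min' hFne ≤ x0 := by
        have := hT.toFinset.min'_mem hFne
        rw [Set.Finite.mem_toFinset] at this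
        exact this.2.2
      linarith

lemma exists_next_left {X : Set ℝ} (hfin : ∀ r : ℝ, (X ∩ Set.Icc (-r) r).Finite)
    (hlb : ∀ r : ℝ, ∃ x ∈ X, x < r) (a : ℝ) :
    ∃ z, z ∈ X ∧ z < a ∧ ∀ x ∈ X, x < a → x ≤ z := by
  obtain ⟨x0, hx0X, hx0⟩ := hlb a
  set r := max |a| |x0| with hr
  have hT : (X ∩ Set.Ico x0 a).Finite := by
    apply (hfin r).subset
    rintro y ⟨hyX, hy1, hy2⟩
    refine ⟨hyX, ?_, ?_⟩
    · have h1 : -|x0| ≤ x0 := neg_abs_le x0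
      have h2 : |x0| ≤ r := le_max_right _ _
      linarith
    · have h1 : a ≤ |a| := le_abs_self a
      have h2 : |a| ≤ r := le_max_left _ _
      linarith
  have hTne : (X ∩ Set.Ico x0 a).Nonempty := ⟨x0, hx0X, le_refl _, hx0⟩
  have hFne : hT.toFinset.Nonempty := by
    rwa [Set.Finite.toFinset_nonempty]
  refine ⟨hT.toFinset.max' hFne, ?_, ?_, ?_⟩
  · have := hT.toFinset.max'_mem hFne
    rw [Set.Finite.mem_toFinset] at this
    exact this.1
  · have := hT.toFinset.max'_mem hFne
    rw [Set.Finite.mem_toFinset] at this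
    exact this.2.2
  · intro x hx hax
    rcases le_or_gt x0 x with h|h
    · exact hT.toFinset.le_max' x (by rw [Set.Finite.mem_toFinset]; exact ⟨hx, h, hax⟩)
    · have h1 : x0 ≤ hT.toFinset.max' hFne := by
        have := hT.toFinset.max'_mem hFne
        rw [Set.Finite.mem_toFinset] at this
        exact this.2.1
      linarith

theorem det_main {X : Set ℝ} {S : ℕ → ℝ}
    (h0X : (0:ℝ) ∈ X) (hS0 : S 0 = 0)
    (hfin : ∀ r : ℝ, (X ∩ Set.Icc (-r) r).Finite)
    (hub : ∀ r : ℝ, ∃ x ∈ X, r < x) (hlb : ∀ r : ℝ, ∃ x ∈ X, x < r)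
    (hw : ∀ n : ℕ, S (n + 1) ∈ X ∧ (∀ m ≤ n, S (n + 1) ≠ S m) ∧
      ∀ z ∈ X, (∀ m ≤ n, z ≠ S m) → z ≠ S (n + 1) →
        |S (n + 1) - S n| < |z - S n|)
    (hnogap : ∃ J : ℕ, ∀ j : ℕ, J ≤ j → ∀ i : ℕ, i < 16 →
      ∃ x ∈ X, x ∈ Set.Ico (-4*(2:ℝ)^j + (i:ℝ)*((2:ℝ)^j/2))
        (-4*(2:ℝ)^j + ((i:ℝ)+1)*((2:ℝ)^j/2))) :
    (∃ N : ℕ, StrictMono (fun n => S (N + n)) ∨ StrictAnti (fun n => S (N + n))) ∧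
    {x : ℝ | x ∈ X ∧ ∀ n : ℕ, S n ≠ x}.Infinite := by
  obtain ⟨u, huX, hua, humin'⟩ : ∃ u : ℝ → ℝ, (∀ a, u a ∈ X) ∧ (∀ a, a < u a) ∧
      (∀ a, ∀ x ∈ X, a < x → u a ≤ x) := by
    choose u h1 h2 h3 using exists_next_right hfin hub
    exact ⟨u, h1, h2, h3⟩
  have humin : ∀ x ∈ X, ∀ a, a < x → u a ≤ x := fun x hx a ha => humin' a x hx ha
  obtain ⟨l, hlX, hla, hlmax'⟩ : ∃ l : ℝ → ℝ, (∀ a, l a ∈ X) ∧ (∀ a, l a < a) ∧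
      (∀ a, ∀ x ∈ X, x < a → x ≤ l a) := by
    choose l h1 h2 h3 using exists_next_left hfin hlb
    exact ⟨l, h1, h2, h3⟩
  have hlmax : ∀ x ∈ X, ∀ a, x < a → x ≤ l a := fun x hx a ha => hlmax' a x hx ha
  -- only finitely many crossings
  have hfc : ∃ N : ℕ, ∀ k, N ≤ k → ¬ GW.Cross S k := by
    by_contra hcon
    push_neg at hcon
    have hinf : ∀ N : ℕ, ∃ n, N ≤ n ∧ GW.Cross S n := by
      intro N
      obtain ⟨k, hk1, hk2⟩ := hcon N
      exact ⟨k, hk1, hk2⟩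
    obtain ⟨J, hJ⟩ := hnogap
    obtain ⟨n, hcn, hWn⟩ := widths_unbounded h0X hS0 hw huX hua humin hlX hla hlmax hinf ((2:ℝ)^J)
    obtain ⟨hWpos, a, ha1, ha2, hempty⟩ := cross_gap hS0 hw huX hua humin hlX hla hlmax hcn
    set W := GW.Wd S (n+1) with hWdef
    have hJ1 : (1:ℝ) ≤ (2:ℝ)^J := one_le_pow₀ (by norm_num)
    have h1W : (1:ℝ) ≤ W := le_trans hJ1 hWn
    set m := ⌊W⌋₊ with hm
    have hm1 : 2^J ≤ m := Nat.le_floor (by push_cast; exact hWn)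
    have hmne : m ≠ 0 := by
      have : (0:ℕ) < 2^J := Nat.pow_pos (by norm_num)
      omega
    set j := Nat.log 2 m with hj
    have hjJ : J ≤ j := by
      have h := Nat.log_mono_right (b := 2) hm1
      rwa [Nat.log_pow (by norm_num)] at h
    have h2j : (2:ℝ)^j ≤ W := by
      have h := Nat.pow_log_le_self 2 hmne
      calc (2:ℝ)^j = ((2^j : ℕ):ℝ) := by push_cast; ring
      _ ≤ (m:ℝ) := by exact_mod_cast h
      _ ≤ W := Nat.floor_le (by linarith)
    have hWlt : W < 2*(2:ℝ)^j := by
      have h := Nat.lt_pow_succ_log_self (by norm_num : 1 < 2) m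
      have h2 : W < (m:ℝ) + 1 := Nat.lt_floor_add_one W
      have h3 : (m:ℝ) + 1 ≤ ((2^(j+1) : ℕ):ℝ) := by exact_mod_cast h
      have h4 : ((2^(j+1) : ℕ):ℝ) = 2*(2:ℝ)^j := by push_cast; ring
      linarith
    set t := (2:ℝ)^j with ht
    have htpos : (0:ℝ) < t := pow_pos (by norm_num) j
    have haL : -4*t ≤ a := by linarith
    have haR : a ≤ W := by linarith
    set y := (a + 4*t)/(t/2) with hy
    have ht2 : (0:ℝ) < t/2 := by linarith
    have hy0 : 0 ≤ y := div_nonneg (by linarith) ht2.le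
    have hymul : y * (t/2) = a + 4*t := div_mul_cancel₀ _ (ne_of_gt ht2)
    set i := ⌊y⌋₊ + 1 with hi
    have hi16 : i < 16 := by
      have hy12 : y < 12 := by
        rw [hy, div_lt_iff₀ ht2]
        linarith
      have h12 : ⌊y⌋₊ < 12 := by
        rw [Nat.floor_lt hy0]
        exact_mod_cast hy12
      omega
    obtain ⟨x, hxX, hxI⟩ := hJ j hjJ i hi16
    rw [Set.mem_Ico] at hxI
    rw [← ht] at hxI
    have hyi : y < (i:ℝ) := by
      have := Nat.lt_floor_add_one y
      rw [hi]; push_cast; linarith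
    have hyi2 : (i:ℝ) ≤ y + 1 := by
      have := Nat.floor_le hy0
      rw [hi]; push_cast; linarith
    have hc1 : a < -4*t + (i:ℝ)*(t/2) := by
      have : y * (t/2) < (i:ℝ) * (t/2) := by
        apply mul_lt_mul_of_pos_right hyi ht2
      linarith [hymul]
    have hc2 : -4*t + ((i:ℝ)+1)*(t/2) ≤ a + t := by
      have : ((i:ℝ)+1) * (t/2) ≤ (y + 2) * (t/2) := by
        apply mul_le_mul_of_nonneg_right (by linarith) ht2.le
      have h5 : (y+2) * (t/2) = a + 4*t + t := by rw [add_mul, hymul]; ring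
      linarith
    refine hempty x hxX ⟨?_, ?_⟩
    · exact lt_of_lt_of_le hc1 hxI.1
    · have := hxI.2
      linarith [h2j, hc2]
  obtain ⟨N₀, hN₀⟩ := hfc
  rcases eventually_mono h0X hS0 hw huX hua humin hlX hla hlmax hN₀ with ⟨hmono, hbnd⟩|⟨hanti, hbnd⟩
  · refine ⟨⟨N₀, Or.inl hmono⟩, ?_⟩
    have hinf2 : (X ∩ Set.Iio (GW.mLo S N₀)).Infinite := by
      apply infinite_of_unbounded_below
      intro r
      obtain ⟨x, hxX, hx⟩ := hlb (min r (GW.mLo S N₀))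
      exact ⟨x, ⟨hxX, lt_of_lt_of_le hx (min_le_right _ _)⟩, lt_of_lt_of_le hx (min_le_left _ _)⟩
    apply hinf2.mono
    rintro x ⟨hxX, hxlt⟩
    exact ⟨hxX, fun nn => ne_of_gt (lt_of_lt_of_le hxlt (hbnd nn))⟩
  · refine ⟨⟨N₀, Or.inr hanti⟩, ?_⟩
    have hinf2 : (X ∩ Set.Ioi (GW.mHi S N₀)).Infinite := by
      apply infinite_of_unbounded_above
      intro r
      obtain ⟨x, hxX, hx⟩ := hub (max r (GW.mHi S N₀))
      exact ⟨x, ⟨hxX, lt_of_le_of_lt (le_max_right _ _) hx⟩, lt_of_le_of_lt (le_max_left _ _) hx⟩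
    apply hinf2.mono
    rintro x ⟨hxX, hxlt⟩
    exact ⟨hxX, fun nn => ne_of_lt (lt_of_le_of_lt (hbnd nn) hxlt)⟩

end GW

/-- dyadic tiles used in the Borel–Cantelli argument -/
def tileSet (j i : ℕ) : Set ℝ :=
  Set.Ico (-4*(2:ℝ)^j + (i:ℝ)*((2:ℝ)^j/2)) (-4*(2:ℝ)^j + ((i:ℝ)+1)*((2:ℝ)^j/2))

lemma meas_zero_of_le_exp {Ω : Type} [MeasurableSpace Ω] (P : MeasureTheory.Measure Ω)
    (E : Set Ω) (h : ∀ m : ℕ, P E ≤ ENNReal.ofReal (Real.exp (-(m:ℝ)))) : P E = 0 := by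
  by_contra h0
  have hne : P E ≠ ⊤ := by
    intro htop
    have := h 0
    rw [htop] at this
    exact absurd (this.trans_lt ENNReal.ofReal_lt_top) (lt_irrefl _)
  have hpos : 0 < (P E).toReal := ENNReal.toReal_pos h0 hne
  obtain ⟨m, hm⟩ := exists_nat_gt (-Real.log ((P E).toReal))
  have hexp : Real.exp (-(m:ℝ)) < (P E).toReal := by
    calc Real.exp (-(m:ℝ)) < Real.exp (Real.log ((P E).toReal)) :=
      Real.exp_lt_exp.mpr (by linarith)
    _ = (P E).toReal := Real.exp_log hpos
  have hfin : ENNReal.ofReal (Real.exp (-(m:ℝ))) < P E := by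
    conv_rhs => rw [← ENNReal.ofReal_toReal hne]
    exact (ENNReal.ofReal_lt_ofReal_iff hpos).mpr hexp
  exact absurd ((h m).trans_lt hfin) (lt_irrefl _)

theorem single_mark_walk_eventually_monotone' (M : SingleMarkModel) :
    ∀ᵐ ωs ∂M.P,
      (∃ N : ℕ, StrictMono (fun n => M.S (N + n) ωs) ∨
        StrictAnti (fun n => M.S (N + n) ωs)) ∧
      {x : ℝ | x ∈ M.X ωs ∧ ∀ n : ℕ, M.S n ωs ≠ x}.Infinite := by
  obtain ⟨hfinae, hmeas, hpois, _⟩ := M.hpoisson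
  have hprob := M.hprob
  -- Poisson probability that a window of the form [a, a+m) is empty
  have hzero : ∀ a : ℝ, ∀ m : ℝ, 0 ≤ m →
      M.P {ωs | ptCount (M.X ωs \ {0}) (Set.Ico a (a + m)) = 0} =
        ENNReal.ofReal (Real.exp (-m)) := by
    intro a m hm
    have hvol : MeasureTheory.volume (Set.Ico a (a + m)) = ENNReal.ofReal m := by
      rw [Real.volume_Ico]; ring_nf
    have h := hpois (Set.Ico a (a + m)) measurableSet_Ico
      (by rw [hvol]; exact ENNReal.ofReal_ne_top) 0
    rw [hvol] at h
    rw [h]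
    congr 1
    rw [ENNReal.toReal_ofReal hm]
    simp
  -- a.s. the configuration is unbounded on both sides
  have hub_ae : ∀ᵐ ωs ∂M.P, ∀ q : ℕ,
      (∃ x ∈ M.X ωs \ {0}, (q:ℝ) < x) ∧ (∃ x ∈ M.X ωs \ {0}, x < -(q:ℝ)) := by
    rw [MeasureTheory.ae_all_iff]
    intro q
    rw [Filter.eventually_and]
    constructor
    · rw [MeasureTheory.ae_iff]
      apply meas_zero_of_le_exp
      intro m
      rw [← hzero ((q:ℝ)+1) m (Nat.cast_nonneg m)]
      apply MeasureTheory.measure_mono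
      intro ωs hωs
      simp only [Set.mem_setOf_eq] at hωs ⊢
      push_neg at hωs
      have hE : M.X ωs \ {0} ∩ Set.Ico ((q:ℝ)+1) ((q:ℝ)+1+(m:ℝ)) = ∅ := by
        ext x
        simp only [Set.mem_inter_iff, Set.mem_Ico, Set.mem_empty_iff_false, iff_false]
        rintro ⟨hx1, hx2, _⟩
        have := hωs x hx1
        linarith
      rw [ptCount, hE, Set.ncard_empty]
    · rw [MeasureTheory.ae_iff]
      apply meas_zero_of_le_exp
      intro m
      rw [← hzero (-(q:ℝ)-(m:ℝ)) m (Nat.cast_nonneg m)]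
      apply MeasureTheory.measure_mono
      intro ωs hωs
      simp only [Set.mem_setOf_eq] at hωs ⊢
      push_neg at hωs
      have hE : M.X ωs \ {0} ∩ Set.Ico (-(q:ℝ)-(m:ℝ)) (-(q:ℝ)-(m:ℝ)+(m:ℝ)) = ∅ := by
        ext x
        simp only [Set.mem_inter_iff, Set.mem_Ico, Set.mem_empty_iff_false, iff_false]
        rintro ⟨hx1, _, hx2⟩
        have := hωs x hx1
        linarith
      rw [ptCount, hE, Set.ncard_empty]
  -- Borel–Cantelli for the tile events
  have htileP : ∀ j i : ℕ, M.P {ωs | ptCount (M.X ωs \ {0}) (tileSet j i) = 0} =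
      ENNReal.ofReal (Real.exp (-((2:ℝ)^j/2))) := by
    intro j i
    have hEq : tileSet j i = Set.Ico (-4*(2:ℝ)^j + (i:ℝ)*((2:ℝ)^j/2))
        ((-4*(2:ℝ)^j + (i:ℝ)*((2:ℝ)^j/2)) + (2:ℝ)^j/2) := by
      rw [tileSet]; congr 1; ring
    rw [hEq, hzero _ ((2:ℝ)^j/2) (by positivity)]
  have hBC : ∀ᵐ ωs ∂M.P, ∀ᶠ j in Filter.atTop,
      ωs ∉ ⋃ i ∈ Finset.range 16,
        {ωs' | ptCount (M.X ωs' \ {0}) (tileSet j i) = 0} := by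
    apply MeasureTheory.ae_eventually_notMem
    set r : ℝ≥0∞ := ENNReal.ofReal (Real.exp (-(1/2 : ℝ))) with hr
    have hr1 : r < 1 := by
      rw [hr]
      apply ENNReal.ofReal_lt_one.mpr
      rw [Real.exp_lt_one_iff]
      norm_num
    have hstep : ∀ j i : ℕ,
        M.P {ωs' | ptCount (M.X ωs' \ {0}) (tileSet j i) = 0} ≤ r^(j+1) := by
      intro j i
      rw [htileP j i]
      have hpow : r^(j+1) = ENNReal.ofReal ((Real.exp (-(1/2:ℝ)))^(j+1)) := by
        rw [hr, ENNReal.ofReal_pow (Real.exp_nonneg _)]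
      rw [hpow]
      apply ENNReal.ofReal_le_ofReal
      rw [← Real.exp_nat_mul]
      apply Real.exp_le_exp.mpr
      have h2j : (j:ℝ) + 1 ≤ (2:ℝ)^j := by
        have h1 := Nat.lt_two_pow_self (n := j)
        have h2 : ((j+1 : ℕ):ℝ) ≤ ((2^j : ℕ):ℝ) := by exact_mod_cast h1
        push_cast at h2
        linarith
      push_cast
      linarith
    have hbound : ∀ j : ℕ, M.P (⋃ i ∈ Finset.range 16,
        {ωs' | ptCount (M.X ωs' \ {0}) (tileSet j i) = 0}) ≤ 16 * r^(j+1) := by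
      intro j
      calc M.P (⋃ i ∈ Finset.range 16,
          {ωs' | ptCount (M.X ωs' \ {0}) (tileSet j i) = 0})
          ≤ ∑ i ∈ Finset.range 16,
            M.P {ωs' | ptCount (M.X ωs' \ {0}) (tileSet j i) = 0} :=
            MeasureTheory.measure_biUnion_finset_le _ _
      _ ≤ ∑ _i ∈ Finset.range 16, r^(j+1) := Finset.sum_le_sum (fun i _ => hstep j i)
      _ = 16 * r^(j+1) := by
          rw [Finset.sum_const, Finset.card_range]
          simp [mul_comm]
    refine ne_top_of_le_ne_top ?_ (ENNReal.tsum_le_tsum hbound)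
    rw [ENNReal.tsum_mul_left, ENNReal.tsum_geometric_add_one]
    apply ENNReal.mul_ne_top (by norm_num)
    apply ENNReal.mul_ne_top (ENNReal.ofReal_ne_top)
    rw [Ne, ENNReal.inv_eq_top]
    intro hcon
    rw [tsub_eq_zero_iff_le] at hcon
    exact absurd hcon (not_le.mpr hr1)
  filter_upwards [hfinae, hub_ae, hBC, M.hwalk] with ωs hfin hub hno hw
  have hfin' : ∀ rr : ℝ, (M.X ωs ∩ Set.Icc (-rr) rr).Finite := by
    intro rr
    apply Set.Finite.subset ((hfin rr).union (Set.finite_singleton 0))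
    intro x hx
    rcases eq_or_ne x 0 with rfl|hne
    · exact Or.inr rfl
    · exact Or.inl ⟨⟨hx.1, hne⟩, hx.2⟩
  have hub' : ∀ rr : ℝ, ∃ x ∈ M.X ωs, rr < x := by
    intro rr
    obtain ⟨x, hx1, hx2⟩ := (hub ⌈|rr|⌉₊).1
    exact ⟨x, hx1.1, lt_of_le_of_lt ((le_abs_self rr).trans (Nat.le_ceil _)) hx2⟩
  have hlb' : ∀ rr : ℝ, ∃ x ∈ M.X ωs, x < rr := by
    intro rr
    obtain ⟨x, hx1, hx2⟩ := (hub ⌈|rr|⌉₊).2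
    refine ⟨x, hx1.1, lt_of_lt_of_le hx2 ?_⟩
    have h1 := neg_abs_le rr
    have h2 : (|rr|) ≤ (⌈|rr|⌉₊ : ℝ) := Nat.le_ceil _
    linarith
  have hnogap : ∃ J : ℕ, ∀ j : ℕ, J ≤ j → ∀ i : ℕ, i < 16 →
      ∃ x ∈ M.X ωs, x ∈ Set.Ico (-4*(2:ℝ)^j + (i:ℝ)*((2:ℝ)^j/2))
        (-4*(2:ℝ)^j + ((i:ℝ)+1)*((2:ℝ)^j/2)) := by
    rw [Filter.eventually_atTop] at hno
    obtain ⟨J, hJ⟩ := hno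
    refine ⟨J, fun j hj i hi => ?_⟩
    have hmem := hJ j hj
    rw [Set.mem_iUnion₂] at hmem
    push_neg at hmem
    have hne := hmem i (Finset.mem_range.mpr hi)
    rw [Set.mem_setOf_eq] at hne
    obtain ⟨x, hx⟩ := Set.nonempty_of_ncard_ne_zero hne
    exact ⟨x, hx.1.1, hx.2⟩
  exact GW.det_main (X := M.X ωs) (S := fun n => M.S n ωs) (M.h0X ωs) (M.hS0 ωs)
    hfin' hub' hlb' hw hnogap


/-- With one mark per point, the greedy walk is almost surely eventually strictly
monotone (it drifts to `+∞` or to `-∞`); in particular infinitely many Poisson points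
are never visited. -/
theorem single_mark_walk_eventually_monotone (M : SingleMarkModel) :
    ∀ᵐ ωs ∂M.P,
      (∃ N : ℕ, StrictMono (fun n => M.S (N + n) ωs) ∨
        StrictAnti (fun n => M.S (N + n) ωs)) ∧
      {x : ℝ | x ∈ M.X ωs ∧ ∀ n : ℕ, M.S n ωs ≠ x}.Infinite :=
  single_mark_walk_eventually_monotone' M

end
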